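/- Contraction proposition. Assume the random Doeblin condition. Fix δ ∈ (0,1) and an integer M ≥ 1, and let A = {ω ∈ Ω : γ_ω ≥ δ and n_ω ≤ M}. Then for ℙ-a.e. ω there exists a probability measure μ_ω on X such that for every n ∈ ℕ, ‖R_{θ^{−n}ω,n} − μ_ω‖_∞ ≤ 2 (1−δ)^{ Σ_{j=1}^{⌊n/M⌋ − 1} 1_A(θ^{−jM}ω) }. -/

import Mathlib

open MeasureTheory ProbabilityTheory Filter

noncomputable section

variable {𝒴 X : Type*} [MeasurableSpace 𝒴] [MeasurableSpace X]

/-- The left shift `θ` on `Ω = 𝒴^ℤ`. -/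
def shift (ω : ℤ → 𝒴) : ℤ → 𝒴 := fun n => ω (n + 1)

/-- `θ^{-n} ω`. -/
def shiftBack (n : ℕ) (ω : ℤ → 𝒴) : ℤ → 𝒴 := fun s => ω (s - n)

/-- The σ-algebra `F_S` generated by the coordinate maps `ω ↦ ω s`, `s ∈ S`. -/
def coordSigma (𝒴 : Type*) [m𝒴 : MeasurableSpace 𝒴] (S : Set ℤ) :
    MeasurableSpace (ℤ → 𝒴) :=
  ⨆ s ∈ S, m𝒴.comap fun ω => ω s

/-- The upper ψ-mixing coefficients `ψ_U(n)`. -/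
def psiU (P : Measure (ℤ → 𝒴)) (n : ℕ) : ℝ :=
  sSup { r : ℝ | ∃ k : ℤ, ∃ A B : Set (ℤ → 𝒴),
    MeasurableSet[coordSigma 𝒴 {s | s ≤ k}] A ∧
    MeasurableSet[coordSigma 𝒴 {s | k + n ≤ s}] B ∧
    0 < (P A).toReal * (P B).toReal ∧
    r = (P (A ∩ B)).toReal / ((P A).toReal * (P B).toReal) - 1 }

/-- The `n`-step kernel composition `R_{ω,n} = R_{ω_0} ∘ R_{ω_1} ∘ ⋯ ∘ R_{ω_{n-1}}`. -/
def Rcomp (R : 𝒴 → Kernel X X) : ℕ → (ℤ → 𝒴) → Kernel X X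
  | 0, _ => Kernel.id
  | n + 1, ω => (Rcomp R n (shift ω)) ∘ₖ R (ω 0)

/-- `‖κ − μ‖_∞`: the supremum over measurable `g` with `sup|g| ≤ 1` and over `x`
of `|κ g (x) − μ(g)|`. -/
def opDist (κ : Kernel X X) (μ : Measure X) : ℝ :=
  sSup { r : ℝ | ∃ g : X → ℝ, Measurable g ∧ (∀ x, |g x| ≤ 1) ∧
    ∃ x : X, r = |(∫ y, g y ∂(κ x)) - ∫ y, g y ∂μ| }

/-- The random Doeblin condition: ℙ-a.s.,
`R_{θ^{-n_ω}ω, n_ω}(x, Γ) ≥ γ_ω m_ω(Γ)` for all `x` and all measurable `Γ`. -/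
def Doeblin (P : Measure (ℤ → 𝒴)) (R : 𝒴 → Kernel X X)
    (nD : (ℤ → 𝒴) → ℕ) (γ : (ℤ → 𝒴) → ℝ) (m : (ℤ → 𝒴) → Measure X) : Prop :=
  ∀ᵐ ω ∂P, ∀ x : X, ∀ Γ : Set X, MeasurableSet Γ →
    ENNReal.ofReal (γ ω) * m ω Γ ≤ Rcomp R (nD ω) (shiftBack (nD ω) ω) x Γ

/-- Equivariance `(R_ω)^* μ_ω = μ_{θ ω}`, ℙ-a.s. -/
def Equivariant (P : Measure (ℤ → 𝒴)) (R : 𝒴 → Kernel X X)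
    (μ : (ℤ → 𝒴) → Measure X) : Prop :=
  ∀ᵐ ω ∂P, ∀ Γ : Set X, MeasurableSet Γ →
    μ (shift ω) Γ = ∫⁻ x, R (ω 0) x Γ ∂(μ ω)

/-- The effective geometric ergodicity rates for a given random variable `K` and
exponent `p`: ℙ-a.s., for all `n`,
`max(‖R_{θ^{-n}ω,n} − μ_ω‖_∞, ‖R_{ω,n} − μ_{θ^n ω}‖_∞) ≤ K(ω) ρ^{n/p}`. -/
def RateFor (P : Measure (ℤ → 𝒴)) (R : 𝒴 → Kernel X X)
    (μ : (ℤ → 𝒴) → Measure X) (ρ p : ℝ) (K : (ℤ → 𝒴) → ℝ) : Prop :=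
  ∀ᵐ ω ∂P, ∀ n : ℕ,
    max (opDist (Rcomp R n (shiftBack n ω)) (μ ω))
        (opDist (Rcomp R n ω) (μ (shift^[n] ω))) ≤ K ω * ρ ^ ((n : ℝ) / p)

/-- Effective rates: for every finite `p ≥ 1` there is `K_p ∈ L^p(ℙ)`
realizing the exponential rates with exponent `ρ^{n/p}`. -/
def EffectiveRates (P : Measure (ℤ → 𝒴)) (R : 𝒴 → Kernel X X)
    (μ : (ℤ → 𝒴) → Measure X) (ρ : ℝ) : Prop :=
  ∀ p : ℝ, 1 ≤ p → ∃ K : (ℤ → 𝒴) → ℝ,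
    MemLp K (ENNReal.ofReal p) P ∧ RateFor P R μ ρ p K

set_option linter.unusedSectionVars false
set_option maxHeartbeats 1000000

lemma shift_iterate_apply (b : ℕ) (ω : ℤ → 𝒴) (s : ℤ) : shift^[b] ω s = ω (s + b) := by
  induction b generalizing ω s with
  | zero => simp
  | succ b ih =>
    rw [Function.iterate_succ_apply, ih]
    simp only [shift]
    congr 1
    push_cast
    ring

lemma shift_iter_shiftBack {b n : ℕ} (h : b ≤ n) (ω : ℤ → 𝒴) :
    shift^[b] (shiftBack n ω) = shiftBack (n - b) ω := by
  funext s
  rw [shift_iterate_apply]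
  simp only [shiftBack]
  congr 1
  have : ((n - b : ℕ) : ℤ) = (n : ℤ) - b := Nat.cast_sub h
  rw [this]; ring

lemma shiftBack_shiftBack (a b : ℕ) (ω : ℤ → 𝒴) :
    shiftBack a (shiftBack b ω) = shiftBack (a + b) ω := by
  funext s
  simp only [shiftBack]
  congr 1
  push_cast
  ring

lemma measurable_shift : Measurable (shift : (ℤ → 𝒴) → (ℤ → 𝒴)) :=
  measurable_pi_lambda _ fun n => measurable_pi_apply (n + 1)

lemma measurable_shiftBack (n : ℕ) : Measurable (shiftBack n : (ℤ → 𝒴) → (ℤ → 𝒴)) :=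
  measurable_pi_lambda _ fun s => measurable_pi_apply (s - n)

def shiftEquiv (𝒴 : Type*) [MeasurableSpace 𝒴] : (ℤ → 𝒴) ≃ᵐ (ℤ → 𝒴) where
  toFun := shift
  invFun := shiftBack 1
  left_inv ω := by funext s; simp [shift, shiftBack]
  right_inv ω := by funext s; simp [shift, shiftBack]
  measurable_toFun := measurable_shift
  measurable_invFun := measurable_shiftBack 1

lemma measurePreserving_shiftBack (P : Measure (ℤ → 𝒴))
    (h : MeasurePreserving (shift : (ℤ → 𝒴) → _) P P) (k : ℕ) :
    MeasurePreserving (shiftBack k : (ℤ → 𝒴) → _) P P := by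
  have h1 : MeasurePreserving (shiftBack 1 : (ℤ → 𝒴) → _) P P :=
    MeasurePreserving.symm (shiftEquiv 𝒴) h
  induction k with
  | zero =>
    have : (shiftBack 0 : (ℤ → 𝒴) → _) = id := by funext ω s; simp [shiftBack]
    rw [this]; exact MeasurePreserving.id P
  | succ k ih =>
    have : (shiftBack (k+1) : (ℤ → 𝒴) → _) = shiftBack 1 ∘ shiftBack k := by
      funext ω; rw [Function.comp_apply, shiftBack_shiftBack]
      norm_num [Nat.add_comm]
    rw [this]
    exact h1.comp ih

instance instRcompMarkov (R : 𝒴 → Kernel X X) [∀ y, IsMarkovKernel (R y)] :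
    ∀ (n : ℕ) (ω : ℤ → 𝒴), IsMarkovKernel (Rcomp R n ω)
  | 0, _ => by rw [Rcomp]; infer_instance
  | n+1, ω => by
    rw [Rcomp]
    have := instRcompMarkov R n (shift ω)
    infer_instance

lemma Rcomp_add (R : 𝒴 → Kernel X X) [∀ y, IsMarkovKernel (R y)] (a : ℕ) :
    ∀ (b : ℕ) (ω : ℤ → 𝒴), Rcomp R (a + b) ω = (Rcomp R a (shift^[b] ω)) ∘ₖ (Rcomp R b ω)
  | 0, ω => by simp [Rcomp, Kernel.comp_id]
  | (b+1), ω => by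
    have h1 : a + (b + 1) = (a + b) + 1 := by ring
    rw [h1]
    show Rcomp R ((a+b)+1) ω = _
    rw [Rcomp, Rcomp_add R a b (shift ω)]
    have := instRcompMarkov R a (shift^[b] (shift ω))
    have := instRcompMarkov R b (shift ω)
    rw [Kernel.comp_assoc]
    rw [← Function.iterate_succ_apply]
    rfl

section CAux
variable {X : Type*} [MeasurableSpace X]

lemma integrable_of_abs_le_one {μ : Measure X} [IsFiniteMeasure μ] {g : X → ℝ}
    (hg : Measurable g) (hb : ∀ x, |g x| ≤ 1) : Integrable g μ :=
  ⟨hg.aestronglyMeasurable,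
    HasFiniteIntegral.of_bounded (C := 1) (Filter.Eventually.of_forall fun x => by
      simpa [Real.norm_eq_abs] using hb x)⟩

lemma abs_integral_le_one {μ : Measure X} [IsProbabilityMeasure μ] {g : X → ℝ}
    (hb : ∀ x, |g x| ≤ 1) : |∫ x, g x ∂μ| ≤ 1 := by
  have h := norm_integral_le_of_norm_le_const (f := g) (μ := μ) (C := 1)
    (Filter.Eventually.of_forall fun x => by simpa [Real.norm_eq_abs] using hb x)
  simpa [Real.norm_eq_abs] using h

lemma integral_repr {μ : Measure X} [IsProbabilityMeasure μ] {g : X → ℝ}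
    (hg : Measurable g) (hb : ∀ x, |g x| ≤ 1) :
    ∫ x, g x ∂μ = (∫⁻ x, ENNReal.ofReal (g x + 1) ∂μ).toReal - 1 := by
  have h1 : Integrable g μ := integrable_of_abs_le_one hg hb
  have h3 : ∫ x, (g x + 1) ∂μ = ∫ x, g x ∂μ + 1 := by
    rw [integral_add h1 (integrable_const 1), integral_const]
    simp
  have h2 : ∫ x, (g x + 1) ∂μ = (∫⁻ x, ENNReal.ofReal (g x + 1) ∂μ).toReal := by
    rw [integral_eq_lintegral_of_nonneg_ae (f := fun x => g x + 1)
      (Filter.Eventually.of_forall fun x => by have := abs_le.mp (hb x); simp only [Pi.zero_apply]; linarith)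
      ((hg.add measurable_const).aestronglyMeasurable)]
  linarith

lemma lintegral_shift_le_two {μ : Measure X} [IsProbabilityMeasure μ] {g : X → ℝ}
    (hb : ∀ x, |g x| ≤ 1) :
    ∫⁻ x, ENNReal.ofReal (g x + 1) ∂μ ≤ 2 := by
  calc ∫⁻ x, ENNReal.ofReal (g x + 1) ∂μ ≤ ∫⁻ _, (2 : ENNReal) ∂μ := by
        refine lintegral_mono fun x => ?_
        have := abs_le.mp (hb x)
        calc ENNReal.ofReal (g x + 1) ≤ ENNReal.ofReal 2 :=
              ENNReal.ofReal_le_ofReal (by linarith)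
          _ = 2 := by norm_num
    _ = 2 := by simp

lemma measurable_kernel_integral (κ : Kernel X X) [IsSFiniteKernel κ] {g : X → ℝ}
    (hg : Measurable g) : Measurable fun x => ∫ y, g y ∂κ x := by
  have : StronglyMeasurable fun p : X × X => g p.2 :=
    (hg.comp measurable_snd).stronglyMeasurable
  exact (MeasureTheory.StronglyMeasurable.integral_kernel_prod_right' (κ := κ) this).measurable

lemma isProbabilityMeasure_bind (μ : Measure X) [IsProbabilityMeasure μ]
    (κ : Kernel X X) [IsMarkovKernel κ] : IsProbabilityMeasure (μ.bind κ) := by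
  constructor
  rw [Measure.bind_apply MeasurableSet.univ (Kernel.measurable κ).aemeasurable]
  simp

lemma integral_bind_eq (μ : Measure X) [IsProbabilityMeasure μ] (κ : Kernel X X)
    [IsMarkovKernel κ] {g : X → ℝ} (hg : Measurable g) (hb : ∀ x, |g x| ≤ 1) :
    ∫ y, g y ∂(μ.bind κ) = ∫ x, (∫ y, g y ∂κ x) ∂μ := by
  haveI := isProbabilityMeasure_bind μ κ
  set F : X → ℝ := fun x => ∫ y, g y ∂κ x with hF
  have hFm : Measurable F := measurable_kernel_integral κ hg
  have hFb : ∀ x, |F x| ≤ 1 := fun x => abs_integral_le_one hb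
  have hfin : ∀ x : X, ∫⁻ y, ENNReal.ofReal (g y + 1) ∂κ x ≠ ⊤ := fun x =>
    ne_top_of_le_ne_top (by norm_num) (lintegral_shift_le_two hb)
  have key : ∀ x : X, ENNReal.ofReal (F x + 1) = ∫⁻ y, ENNReal.ofReal (g y + 1) ∂κ x := by
    intro x
    have := integral_repr (μ := κ x) hg hb
    rw [hF]
    simp only []
    rw [this]
    rw [sub_add_cancel]
    exact ENNReal.ofReal_toReal (hfin x)
  rw [integral_repr hg hb, integral_repr hFm hFb]
  congr 2
  rw [Measure.lintegral_bind (f := fun x => ENNReal.ofReal (g x + 1)) (Kernel.measurable κ).aemeasurable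
    ((hg.add measurable_const).ennreal_ofReal).aemeasurable]
  · exact (lintegral_congr fun x => (key x).symm)

/-- TV-type comparison predicate. -/
def dLE (p q : Measure X) (ε : ℝ) : Prop :=
  ∀ g : X → ℝ, Measurable g → (∀ x, |g x| ≤ 1) → |(∫ x, g x ∂p) - ∫ x, g x ∂q| ≤ ε

lemma dLE_two (p q : Measure X) [IsProbabilityMeasure p] [IsProbabilityMeasure q] :
    dLE p q 2 := by
  intro g hg hb
  have h1 := abs_integral_le_one (μ := p) hb
  have h2 := abs_integral_le_one (μ := q) hb
  calc |(∫ x, g x ∂p) - ∫ x, g x ∂q| ≤ |∫ x, g x ∂p| + |∫ x, g x ∂q| := abs_sub _ _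
    _ ≤ 2 := by linarith

lemma dLE_bind {p q : Measure X} [IsProbabilityMeasure p] [IsProbabilityMeasure q]
    (κ : Kernel X X) [IsMarkovKernel κ] {ε : ℝ} (h : dLE p q ε) :
    dLE (p.bind κ) (q.bind κ) ε := by
  intro g hg hb
  rw [integral_bind_eq p κ hg hb, integral_bind_eq q κ hg hb]
  exact h _ (measurable_kernel_integral κ hg) (fun x => abs_integral_le_one hb)

end CAux

section DAux
variable {X : Type*} [MeasurableSpace X]

lemma integral_smul_minorant {ν : Measure X} [IsProbabilityMeasure ν]
    (mm : Measure X) [IsProbabilityMeasure mm] {δ' : ℝ} (h0 : 0 < δ')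
    (hdoeb : ∀ Γ : Set X, MeasurableSet Γ → ENNReal.ofReal δ' * mm Γ ≤ ν Γ)
    {f : X → ℝ} (hf : Measurable f) (hnn : ∀ x, 0 ≤ f x) (hb : ∀ x, f x ≤ 2) :
    δ' * ∫ x, f x ∂mm ≤ ∫ x, f x ∂ν := by
  have hle : (ENNReal.ofReal δ') • mm ≤ ν := by
    refine Measure.le_iff.mpr fun s hs => ?_
    rw [Measure.smul_apply, smul_eq_mul]
    exact hdoeb s hs
  have hint : Integrable f ν :=
    integrable_of_abs_le_one (μ := ν) (g := fun x => f x / 2)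
      (hf.div_const 2) (fun x => by rw [abs_div]; rw [abs_of_nonneg (hnn x)]; simp; linarith [hb x, hnn x])
      |>.const_mul 2 |>.congr (Filter.Eventually.of_forall fun x => by ring)
  have := integral_mono_measure hle (Filter.Eventually.of_forall hnn) hint
  calc δ' * ∫ x, f x ∂mm = ∫ x, f x ∂((ENNReal.ofReal δ') • mm) := by
        rw [integral_smul_measure, ENNReal.toReal_ofReal h0.le, smul_eq_mul]
    _ ≤ ∫ x, f x ∂ν := this

lemma dLE_bind_doeblin {p q : Measure X} [IsProbabilityMeasure p] [IsProbabilityMeasure q]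
    (κ : Kernel X X) [IsMarkovKernel κ] (mm : Measure X) [IsProbabilityMeasure mm]
    {δ' : ℝ} (h0 : 0 < δ') (h1 : δ' < 1)
    (hdoeb : ∀ (x : X) (Γ : Set X), MeasurableSet Γ → ENNReal.ofReal δ' * mm Γ ≤ κ x Γ)
    {ε : ℝ} (hε : 0 ≤ ε) (h : dLE p q ε) : dLE (p.bind κ) (q.bind κ) ((1 - δ') * ε) := by
  intro g hg hb
  rw [integral_bind_eq p κ hg hb, integral_bind_eq q κ hg hb]
  set F : X → ℝ := fun x => ∫ y, g y ∂κ x with hF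
  have hFm : Measurable F := measurable_kernel_integral κ hg
  set c : ℝ := ∫ y, g y ∂mm with hc
  -- key bound |F x - δ' c| ≤ 1 - δ'
  have key : ∀ x, |F x - δ' * c| ≤ 1 - δ' := by
    intro x
    have hub : δ' * ∫ y, (1 - g y) ∂mm ≤ ∫ y, (1 - g y) ∂κ x :=
      integral_smul_minorant mm h0 (hdoeb x) (measurable_const.sub hg)
        (fun y => by linarith [abs_le.mp (hb y)]) (fun y => by linarith [abs_le.mp (hb y)])
    have hlb : δ' * ∫ y, (1 + g y) ∂mm ≤ ∫ y, (1 + g y) ∂κ x :=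
      integral_smul_minorant mm h0 (hdoeb x) (measurable_const.add hg)
        (fun y => by linarith [abs_le.mp (hb y)]) (fun y => by linarith [abs_le.mp (hb y)])
    have hintg : Integrable g (κ x) := integrable_of_abs_le_one hg hb
    have hintm : Integrable g mm := integrable_of_abs_le_one hg hb
    have e1 : ∫ y, (1 - g y) ∂κ x = 1 - F x := by
      rw [integral_sub (integrable_const 1) hintg, integral_const]; simp [hF]
    have e2 : ∫ y, (1 - g y) ∂mm = 1 - c := by
      rw [integral_sub (integrable_const 1) hintm, integral_const]; simp [hc]
    have e3 : ∫ y, (1 + g y) ∂κ x = 1 + F x := by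
      rw [integral_add (integrable_const 1) hintg, integral_const]; simp [hF]
    have e4 : ∫ y, (1 + g y) ∂mm = 1 + c := by
      rw [integral_add (integrable_const 1) hintm, integral_const]; simp [hc]
    rw [e1, e2] at hub
    rw [e3, e4] at hlb
    rw [abs_le]
    constructor <;> nlinarith
  -- apply hypothesis to (F - δ' c)/(1-δ')
  have h1δ : (0:ℝ) < 1 - δ' := by linarith
  have happ := h (fun x => (F x - δ' * c) / (1 - δ'))
    ((hFm.sub measurable_const).div_const _)
    (fun x => by
      rw [abs_div, abs_of_pos h1δ, div_le_one h1δ]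
      exact key x)
  have hip : ∫ x, (F x - δ' * c) / (1 - δ') ∂p = ((∫ x, F x ∂p) - δ' * c) / (1 - δ') := by
    rw [integral_div, integral_sub (integrable_of_abs_le_one hFm fun x => abs_integral_le_one hb) (integrable_const _), integral_const]
    simp
  have hiq : ∫ x, (F x - δ' * c) / (1 - δ') ∂q = ((∫ x, F x ∂q) - δ' * c) / (1 - δ') := by
    rw [integral_div, integral_sub (integrable_of_abs_le_one hFm fun x => abs_integral_le_one hb) (integrable_const _), integral_const]
    simp
  rw [hip, hiq, div_sub_div_same, abs_div, abs_of_pos h1δ, div_le_iff₀ h1δ] at happ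
  have : (∫ x, F x ∂p) - δ' * c - ((∫ x, F x ∂q) - δ' * c) = (∫ x, F x ∂p) - ∫ x, F x ∂q := by ring
  rw [this] at happ
  calc |(∫ x, F x ∂p) - ∫ x, F x ∂q| ≤ ε * (1 - δ') := happ
    _ = (1 - δ') * ε := by ring
end DAux

section EAux
variable {X : Type*} [MeasurableSpace X]

lemma int_le_of_setwise {p q : Measure X} [IsProbabilityMeasure p] [IsProbabilityMeasure q]
    {ε : ℝ} (hε : 0 ≤ ε)
    (h : ∀ Γ : Set X, MeasurableSet Γ → (p Γ).toReal ≤ (q Γ).toReal + ε)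
    {f : X → ℝ} (hf : Measurable f) (h0 : ∀ x, 0 ≤ f x) (h1 : ∀ x, f x ≤ 1) :
    ∫ x, f x ∂p ≤ (∫ x, f x ∂q) + ε := by
  have hip : ∫ x, f x ∂p = (∫⁻ x, ENNReal.ofReal (f x) ∂p).toReal := by
    rw [integral_eq_lintegral_of_nonneg_ae (Filter.Eventually.of_forall h0)
      hf.aestronglyMeasurable]
  have hiq : ∫ x, f x ∂q = (∫⁻ x, ENNReal.ofReal (f x) ∂q).toReal := by
    rw [integral_eq_lintegral_of_nonneg_ae (Filter.Eventually.of_forall h0)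
      hf.aestronglyMeasurable]
  have hlp : ∫⁻ x, ENNReal.ofReal (f x) ∂p = ∫⁻ t in Set.Ioi 0, p {a | t < f a} :=
    lintegral_eq_lintegral_meas_lt p (Filter.Eventually.of_forall h0) hf.aemeasurable
  have hlq : ∫⁻ x, ENNReal.ofReal (f x) ∂q = ∫⁻ t in Set.Ioi 0, q {a | t < f a} :=
    lintegral_eq_lintegral_meas_lt q (Filter.Eventually.of_forall h0) hf.aemeasurable
  -- pointwise bound on (Ioi 0)
  have hpt : ∀ t : ℝ, t ∈ Set.Ioi (0:ℝ) →
      p {a | t < f a} ≤ q {a | t < f a} +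
        (Set.Ioc (0:ℝ) 1).indicator (fun _ => ENNReal.ofReal ε) t := by
    intro t ht
    by_cases hle : t ≤ 1
    · have hmeas : MeasurableSet {a | t < f a} := measurableSet_lt measurable_const hf
      have := h _ hmeas
      have hfin : p {a | t < f a} ≠ ⊤ := measure_ne_top _ _
      have hfinq : q {a | t < f a} ≠ ⊤ := measure_ne_top _ _
      rw [Set.indicator_of_mem (Set.mem_Ioc.mpr ⟨ht, hle⟩)]
      rw [← ENNReal.ofReal_toReal hfin, ← ENNReal.ofReal_toReal hfinq,
        ← ENNReal.ofReal_add ENNReal.toReal_nonneg hε]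
      exact ENNReal.ofReal_le_ofReal this
    · have : {a | t < f a} = ∅ := by
        ext a; simp only [Set.mem_setOf_eq, Set.mem_empty_iff_false, iff_false, not_lt]
        linarith [h1 a]
      rw [this]
      simp
  have hmain : ∫⁻ t in Set.Ioi 0, p {a | t < f a} ≤
      (∫⁻ t in Set.Ioi 0, q {a | t < f a}) + ENNReal.ofReal ε := by
    calc ∫⁻ t in Set.Ioi 0, p {a | t < f a}
        ≤ ∫⁻ t in Set.Ioi 0, (q {a | t < f a} +
            (Set.Ioc (0:ℝ) 1).indicator (fun _ => ENNReal.ofReal ε) t) :=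
          setLIntegral_mono' measurableSet_Ioi hpt
      _ = (∫⁻ t in Set.Ioi 0, q {a | t < f a}) +
            ∫⁻ t in Set.Ioi 0, (Set.Ioc (0:ℝ) 1).indicator (fun _ => ENNReal.ofReal ε) t := by
          rw [lintegral_add_right]
          exact (measurable_const.indicator measurableSet_Ioc)
      _ ≤ (∫⁻ t in Set.Ioi 0, q {a | t < f a}) + ENNReal.ofReal ε := by
          gcongr
          rw [lintegral_indicator measurableSet_Ioc, setLIntegral_const,
            Measure.restrict_apply measurableSet_Ioc]
          have : Set.Ioc (0:ℝ) 1 ∩ Set.Ioi 0 = Set.Ioc 0 1 := by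
            ext t; simp only [Set.mem_inter_iff, Set.mem_Ioc, Set.mem_Ioi, and_iff_left_iff_imp]
            exact fun h => h.1
          rw [this, Real.volume_Ioc]
          simp
  -- convert to real
  have hfinp : ∫⁻ x, ENNReal.ofReal (f x) ∂p ≠ ⊤ := by
    refine ne_top_of_le_ne_top (b := 1) (by norm_num) ?_
    calc ∫⁻ x, ENNReal.ofReal (f x) ∂p ≤ ∫⁻ _, 1 ∂p :=
          lintegral_mono fun x =>
            (ENNReal.ofReal_le_ofReal (h1 x)).trans (by simp)
      _ = 1 := by simp
  have hfinq2 : ∫⁻ x, ENNReal.ofReal (f x) ∂q ≠ ⊤ := by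
    refine ne_top_of_le_ne_top (b := 1) (by norm_num) ?_
    calc ∫⁻ x, ENNReal.ofReal (f x) ∂q ≤ ∫⁻ _, 1 ∂q :=
          lintegral_mono fun x =>
            (ENNReal.ofReal_le_ofReal (h1 x)).trans (by simp)
      _ = 1 := by simp
  rw [hip, hiq]
  rw [hlp, hlq] at *
  have := ENNReal.toReal_mono (by
      rw [← hlq]
      exact ENNReal.add_ne_top.mpr ⟨hfinq2, ENNReal.ofReal_ne_top⟩) hmain
  rw [ENNReal.toReal_add (by rw [← hlq]; exact hfinq2) ENNReal.ofReal_ne_top,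
    ENNReal.toReal_ofReal hε] at this
  exact this

lemma dInt_of_dSet {p q : Measure X} [IsProbabilityMeasure p] [IsProbabilityMeasure q]
    {ε : ℝ} (hε : 0 ≤ ε)
    (h : ∀ Γ : Set X, MeasurableSet Γ → |(p Γ).toReal - (q Γ).toReal| ≤ ε) :
    dLE p q (2 * ε) := by
  intro g hg hb
  set f : X → ℝ := fun x => (g x + 1) / 2 with hfdef
  have hfm : Measurable f := (hg.add measurable_const).div_const 2
  have hf0 : ∀ x, 0 ≤ f x := fun x => by
    have := abs_le.mp (hb x); simp only [hfdef]; linarith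
  have hf1 : ∀ x, f x ≤ 1 := fun x => by
    have := abs_le.mp (hb x); simp only [hfdef]; linarith
  have hside : ∀ Γ : Set X, MeasurableSet Γ → (p Γ).toReal ≤ (q Γ).toReal + ε :=
    fun Γ hΓ => by have := abs_le.mp (h Γ hΓ); linarith
  have hside' : ∀ Γ : Set X, MeasurableSet Γ → (q Γ).toReal ≤ (p Γ).toReal + ε :=
    fun Γ hΓ => by have := abs_le.mp (h Γ hΓ); linarith
  have h1 := int_le_of_setwise hε hside hfm hf0 hf1
  have h2 := int_le_of_setwise hε hside' hfm hf0 hf1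
  have hgp : ∫ x, g x ∂p = 2 * (∫ x, f x ∂p) - 1 := by
    have : ∫ x, f x ∂p = ((∫ x, g x ∂p) + 1) / 2 := by
      rw [integral_div, integral_add (integrable_of_abs_le_one hg hb) (integrable_const 1),
        integral_const]
      simp
    rw [this]; ring
  have hgq : ∫ x, g x ∂q = 2 * (∫ x, f x ∂q) - 1 := by
    have : ∫ x, f x ∂q = ((∫ x, g x ∂q) + 1) / 2 := by
      rw [integral_div, integral_add (integrable_of_abs_le_one hg hb) (integrable_const 1),
        integral_const]
      simp
    rw [this]; ring
  rw [hgp, hgq, abs_le]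
  constructor <;> linarith
end EAux

section FAux
open Filter
variable {X : Type*} [MeasurableSpace X]

lemma exists_limit_measure (ν : ℕ → Measure X) (hprob : ∀ k, IsProbabilityMeasure (ν k))
    (ε : ℕ → ℝ)
    (hcauchy : ∀ k k', k ≤ k' → ∀ Γ : Set X, MeasurableSet Γ →
      |(ν k' Γ).toReal - (ν k Γ).toReal| ≤ ε k)
    (hε0 : Tendsto ε atTop (nhds 0)) :
    ∃ μ : Measure X, IsProbabilityMeasure μ ∧ ∀ Γ : Set X, MeasurableSet Γ →
      Tendsto (fun k => (ν k Γ).toReal) atTop (nhds ((μ Γ).toReal)) := by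
  set ℓ : Set X → ℝ := fun Γ => limUnder atTop fun k => (ν k Γ).toReal with hℓ
  have hconv : ∀ Γ : Set X, MeasurableSet Γ →
      Tendsto (fun k => (ν k Γ).toReal) atTop (nhds (ℓ Γ)) := by
    intro Γ hΓ
    have hcs : CauchySeq fun k => (ν k Γ).toReal := by
      apply cauchySeq_of_le_tendsto_0 (fun N => 2 * ε N)
      · intro n m N hn hm
        rw [Real.dist_eq]
        have h1 := hcauchy N n hn Γ hΓ
        have h2 := hcauchy N m hm Γ hΓ
        rw [abs_le] at h1 h2 ⊢
        constructor <;> [linarith [h1.1, h2.2]; linarith [h1.2, h2.1]]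
      · simpa using hε0.const_mul 2
    obtain ⟨l, hl⟩ := cauchySeq_tendsto_of_complete hcs
    have : ℓ Γ = l := hl.limUnder_eq
    rwa [this]
  have hnn : ∀ Γ : Set X, MeasurableSet Γ → 0 ≤ ℓ Γ := fun Γ hΓ =>
    ge_of_tendsto' (hconv Γ hΓ) fun k => ENNReal.toReal_nonneg
  -- countable additivity
  have hCA : ∀ f : ℕ → Set X, (∀ i, MeasurableSet (f i)) → Pairwise (Function.onFun Disjoint f) →
      Summable (fun i => ℓ (f i)) ∧ ℓ (⋃ i, f i) = ∑' i, ℓ (f i) := by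
    intro f hfm hfd
    set U : Set X := ⋃ i, f i with hU
    have hUm : MeasurableSet U := MeasurableSet.iUnion hfm
    set tail : ℕ → Set X := fun N => ⋃ i, f (N + i) with htail
    have htailm : ∀ N, MeasurableSet (tail N) := fun N => MeasurableSet.iUnion fun i => hfm _
    -- partition identity for each k, N
    have hpart : ∀ (k N : ℕ),
        (ν k U).toReal = (∑ i ∈ Finset.range N, (ν k (f i)).toReal) + (ν k (tail N)).toReal := by
      intro k N
      have hset : U = (⋃ i ∈ Finset.range N, f i) ∪ tail N := by
        ext x
        simp only [hU, htail, Set.mem_iUnion, Set.mem_union, Finset.mem_range]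
        constructor
        · rintro ⟨j, hj⟩
          rcases lt_or_ge j N with hlt | hge
          · exact Or.inl ⟨j, hlt, hj⟩
          · exact Or.inr ⟨j - N, by rwa [Nat.add_sub_cancel' hge]⟩
        · rintro (⟨j, _, hj⟩ | ⟨i, hi⟩)
          · exact ⟨j, hj⟩
          · exact ⟨N + i, hi⟩
      have hdisj : Disjoint (⋃ i ∈ Finset.range N, f i) (tail N) := by
        rw [Set.disjoint_left]
        rintro x hx hx'
        simp only [Set.mem_iUnion, Finset.mem_range] at hx
        simp only [htail, Set.mem_iUnion] at hx'
        obtain ⟨j, hjN, hxj⟩ := hx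
        obtain ⟨i, hxi⟩ := hx'
        have hne : j ≠ N + i := by omega
        exact Set.disjoint_left.mp (hfd hne) hxj hxi
      have h1 : ν k U = ν k (⋃ i ∈ Finset.range N, f i) + ν k (tail N) := by
        rw [hset, measure_union hdisj (htailm N)]
      have h2 : ν k (⋃ i ∈ Finset.range N, f i) = ∑ i ∈ Finset.range N, ν k (f i) :=
        measure_biUnion_finset (fun i _ j _ hij => hfd hij) (fun i _ => hfm i)
      have hfs : (∑ i ∈ Finset.range N, ν k (f i)) ≠ ⊤ :=
        (ENNReal.sum_lt_top.mpr fun i _ => measure_lt_top _ _).ne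
      rw [h1, h2, ENNReal.toReal_add hfs (measure_ne_top _ _),
        ENNReal.toReal_sum (fun i _ => measure_ne_top _ _)]
    -- limit identity
    have hID : ∀ N : ℕ, ℓ U = (∑ i ∈ Finset.range N, ℓ (f i)) + ℓ (tail N) := by
      intro N
      have t1 : Tendsto (fun k => (∑ i ∈ Finset.range N, (ν k (f i)).toReal) +
          (ν k (tail N)).toReal) atTop
          (nhds ((∑ i ∈ Finset.range N, ℓ (f i)) + ℓ (tail N))) := by
        exact Tendsto.add (tendsto_finset_sum _ fun i _ => hconv (f i) (hfm i))
          (hconv (tail N) (htailm N))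
      have t2 : Tendsto (fun k => (ν k U).toReal) atTop
          (nhds ((∑ i ∈ Finset.range N, ℓ (f i)) + ℓ (tail N))) := by
        refine t1.congr fun k => (hpart k N).symm
      exact tendsto_nhds_unique (hconv U hUm) t2
    have htail_nn : ∀ N, 0 ≤ ℓ (tail N) := fun N => hnn _ (htailm N)
    -- ℓ (tail N) → 0
    have htail0 : Tendsto (fun N => ℓ (tail N)) atTop (nhds 0) := by
      rw [Metric.tendsto_atTop]
      intro η hη
      -- choose k with ε k < η / 2
      have : ∀ᶠ k in atTop, |ε k| < η / 2 := by
        have := Metric.tendsto_atTop.mp hε0 (η / 2) (by linarith)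
        simp only [Real.dist_eq, sub_zero] at this
        obtain ⟨K, hK⟩ := this
        exact eventually_atTop.mpr ⟨K, hK⟩
      obtain ⟨k, hk⟩ := this.exists
      -- ν k (tail N) → 0 as N → ∞
      have hinter : (⋂ N, tail N) = ∅ := by
        ext x
        simp only [Set.mem_iInter, Set.mem_empty_iff_false, iff_false]
        intro hx
        obtain ⟨i0, hi0⟩ := Set.mem_iUnion.mp (hx 0)
        obtain ⟨i1, hi1⟩ := Set.mem_iUnion.mp (hx (0 + i0 + 1))
        have hne : 0 + i0 ≠ 0 + i0 + 1 + i1 := by omega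
        exact Set.disjoint_left.mp (hfd hne) hi0 hi1
      have hanti : Antitone tail := by
        intro N N' hNN'
        intro x hx
        obtain ⟨i, hi⟩ := Set.mem_iUnion.mp hx
        exact Set.mem_iUnion.mpr ⟨N' - N + i, by rwa [← Nat.add_assoc, Nat.add_sub_cancel' hNN']⟩
      have hm0 : Tendsto (fun N => ν k (tail N)) atTop (nhds 0) := by
        have := tendsto_measure_iInter_atTop (μ := ν k)
          (fun N => (htailm N).nullMeasurableSet) hanti ⟨0, measure_ne_top _ _⟩
        rwa [hinter, measure_empty] at this
      have hm0' : Tendsto (fun N => (ν k (tail N)).toReal) atTop (nhds 0) := by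
        have h := (ENNReal.tendsto_toReal (by simp : (0:ENNReal) ≠ ⊤)).comp hm0
        simpa [Function.comp_def] using h
      have : ∀ᶠ N in atTop, (ν k (tail N)).toReal < η / 2 := by
        have := Metric.tendsto_atTop.mp hm0' (η / 2) (by linarith)
        simp only [Real.dist_eq, sub_zero] at this
        obtain ⟨N₀, hN₀⟩ := this
        exact eventually_atTop.mpr ⟨N₀, fun N hN => lt_of_abs_lt (hN₀ N hN)⟩
      obtain ⟨N₀, hN₀⟩ := eventually_atTop.mp this
      refine ⟨N₀, fun N hN => ?_⟩
      have hest : ℓ (tail N) ≤ ε k + (ν k (tail N)).toReal := by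
        have habs : |ℓ (tail N) - (ν k (tail N)).toReal| ≤ ε k := by
          have htend : Tendsto (fun k' => |(ν k' (tail N)).toReal - (ν k (tail N)).toReal|)
              atTop (nhds (|ℓ (tail N) - (ν k (tail N)).toReal|)) :=
            ((hconv (tail N) (htailm N)).sub tendsto_const_nhds).abs
          refine le_of_tendsto htend ?_
          exact eventually_atTop.mpr ⟨k, fun k' hk' => hcauchy k k' hk' (tail N) (htailm N)⟩
        linarith [abs_le.mp habs]
      rw [Real.dist_eq, sub_zero, abs_of_nonneg (htail_nn N)]
      calc ℓ (tail N) ≤ ε k + (ν k (tail N)).toReal := hest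
        _ < η / 2 + η / 2 := by
            have := lt_of_abs_lt hk
            have := hN₀ N hN
            linarith
        _ = η := by ring
    -- summability and sum identity
    have hsummable : Summable fun i => ℓ (f i) := by
      apply summable_of_sum_range_le (c := ℓ U) (fun i => hnn _ (hfm i))
      intro N
      have := hID N
      linarith [htail_nn N]
    have hps : Tendsto (fun N => ∑ i ∈ Finset.range N, ℓ (f i)) atTop (nhds (ℓ U)) := by
      have : (fun N => ∑ i ∈ Finset.range N, ℓ (f i)) = fun N => ℓ U - ℓ (tail N) := by
        funext N
        have := hID N
        linarith
      rw [this]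
      simpa using tendsto_const_nhds.sub htail0
    exact ⟨hsummable, tendsto_nhds_unique hps hsummable.hasSum.tendsto_sum_nat⟩
  -- build the measure
  have hempty : ℓ ∅ = 0 := by
    have h0 : Tendsto (fun k => ((ν k) (∅ : Set X)).toReal) atTop (nhds 0) := by
      simpa using (tendsto_const_nhds : Tendsto (fun _ : ℕ => (0:ℝ)) atTop (nhds 0))
    exact tendsto_nhds_unique (hconv ∅ MeasurableSet.empty) h0
  set μ : Measure X := Measure.ofMeasurable (fun s _ => ENNReal.ofReal (ℓ s))
    (by show ENNReal.ofReal (ℓ ∅) = 0; rw [hempty]; simp)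
    (by
      intro f hfm hfd
      show ENNReal.ofReal (ℓ (⋃ i, f i)) = ∑' i, ENNReal.ofReal (ℓ (f i))
      rw [(hCA f hfm hfd).2]
      exact ENNReal.ofReal_tsum_of_nonneg (fun i => hnn _ (hfm i)) (hCA f hfm hfd).1) with hμ
  have happly : ∀ Γ : Set X, MeasurableSet Γ → μ Γ = ENNReal.ofReal (ℓ Γ) := fun Γ hΓ =>
    Measure.ofMeasurable_apply Γ hΓ
  have huniv : ℓ Set.univ = 1 := by
    have h1 : Tendsto (fun k => ((ν k) (Set.univ : Set X)).toReal) atTop (nhds 1) := by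
      have : ∀ k, ((ν k) (Set.univ : Set X)).toReal = 1 := fun k => by
        rw [(hprob k).measure_univ]; simp
      simpa [this] using (tendsto_const_nhds : Tendsto (fun _ : ℕ => (1:ℝ)) atTop (nhds 1))
    exact tendsto_nhds_unique (hconv Set.univ MeasurableSet.univ) h1
  refine ⟨μ, ⟨by rw [happly Set.univ MeasurableSet.univ, huniv]; simp⟩, fun Γ hΓ => ?_⟩
  rw [happly Γ hΓ, ENNReal.toReal_ofReal (hnn Γ hΓ)]
  exact hconv Γ hΓ

end FAux
lemma card_filter_succ (P : ℕ → Prop) [DecidablePred P] (q : ℕ) :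
    ((Finset.Icc 1 (q + 1 - 1)).filter P).card =
      ((Finset.Icc 1 (q - 1)).filter P).card + (if 1 ≤ q ∧ P q then 1 else 0) := by
  rcases Nat.eq_zero_or_pos q with rfl | hq
  · simp
  · have hq1 : q + 1 - 1 = q := by omega
    have hIcc : Finset.Icc 1 q = insert q (Finset.Icc 1 (q - 1)) := by
      ext a; simp only [Finset.mem_Icc, Finset.mem_insert]; omega
    have hnot : q ∉ Finset.Icc 1 (q - 1) := by simp only [Finset.mem_Icc]; omega
    rw [hq1, hIcc, Finset.filter_insert]
    by_cases hP : P q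
    · rw [if_pos hP, Finset.card_insert_of_notMem
        (fun hmem => hnot (Finset.mem_of_mem_filter _ hmem)), if_pos ⟨hq, hP⟩]
    · rw [if_neg hP, if_neg (by tauto)]; ring

section Main
open Filter
variable {𝒴 X : Type*} [MeasurableSpace 𝒴] [MeasurableSpace X]

lemma contraction_pointwise
    (R : 𝒴 → Kernel X X) [∀ y, IsMarkovKernel (R y)]
    (nD : (ℤ → 𝒴) → ℕ) (γ : (ℤ → 𝒴) → ℝ) (m : (ℤ → 𝒴) → Measure X)
    (hmprob : ∀ ω, IsProbabilityMeasure (m ω))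
    {δ : ℝ} (hδ0 : 0 < δ) (hδ1 : δ < 1) {M : ℕ} (hM : 1 ≤ M)
    (ω : ℤ → 𝒴)
    (hω : ∀ j : ℕ, ∀ (x : X) (Γ : Set X), MeasurableSet Γ →
        ENNReal.ofReal (γ (shiftBack (j * M) ω)) * m (shiftBack (j * M) ω) Γ ≤
          Rcomp R (nD (shiftBack (j * M) ω))
            (shiftBack (nD (shiftBack (j * M) ω)) (shiftBack (j * M) ω)) x Γ) :
    ∃ μω : Measure X, IsProbabilityMeasure μω ∧
      ∀ n : ℕ, opDist (Rcomp R n (shiftBack n ω)) μω ≤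
        2 * (1 - δ) ^
          (((Finset.Icc 1 (n / M - 1)).filter fun j =>
            δ ≤ γ (shiftBack (j * M) ω) ∧ nD (shiftBack (j * M) ω) ≤ M).card) := by
  have hXne : Nonempty X := by
    by_contra hne
    rw [not_nonempty_iff] at hne
    have h1 := (hmprob ω).measure_univ
    rw [Set.univ_eq_empty_iff.mpr hne, measure_empty] at h1
    exact zero_ne_one h1
  obtain ⟨x0⟩ := hXne
  haveI : ∀ (k : ℕ) (ω' : ℤ → 𝒴), IsMarkovKernel (Rcomp R k ω') := fun k ω' =>
    instRcompMarkov R k ω'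
  -- splitting of the kernel chain
  have hsplit : ∀ a b : ℕ, Rcomp R (a + b) (shiftBack (a + b) ω) =
      (Rcomp R a (shiftBack a ω)) ∘ₖ Rcomp R b (shiftBack (a + b) ω) := by
    intro a b
    rw [Rcomp_add R a b (shiftBack (a + b) ω),
      shift_iter_shiftBack (Nat.le_add_left b a), Nat.add_sub_cancel]
  -- bind associativity through kernel composition
  have hassoc : ∀ (μ : Measure X) (κ₁ κ₂ : Kernel X X),
      μ.bind ⇑(κ₁ ∘ₖ κ₂) = (μ.bind ⇑κ₂).bind ⇑κ₁ := by
    intro μ κ₁ κ₂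
    have hfun : ⇑(κ₁ ∘ₖ κ₂) = fun a => (κ₂ a).bind ⇑κ₁ :=
      funext fun a => Kernel.comp_apply κ₁ κ₂ a
    rw [hfun, ← Measure.bind_bind (Kernel.measurable κ₂).aemeasurable (Kernel.measurable κ₁).aemeasurable]
  -- the chain contraction along blocks
  have hchain : ∀ q : ℕ, ∀ p pq : Measure X, IsProbabilityMeasure p → IsProbabilityMeasure pq →
      ∀ ε : ℝ, 0 ≤ ε → dLE p pq ε →
      dLE (p.bind ⇑(Rcomp R (q * M) (shiftBack (q * M) ω)))
        (pq.bind ⇑(Rcomp R (q * M) (shiftBack (q * M) ω)))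
        (ε * (1 - δ) ^ (((Finset.Icc 1 (q - 1)).filter fun j =>
          δ ≤ γ (shiftBack (j * M) ω) ∧ nD (shiftBack (j * M) ω) ≤ M).card)) := by
    intro q
    induction q with
    | zero =>
      intro p pq hp hpq ε hε h
      simp only [Nat.zero_mul]
      have hid : ∀ μ : Measure X, μ.bind ⇑(Rcomp R 0 (shiftBack 0 ω)) = μ := by
        intro μ
        show μ.bind ⇑(Kernel.id : Kernel X X) = μ
        have hfun : ⇑(Kernel.id : Kernel X X) = fun a : X => Measure.dirac a :=
          funext fun a => Kernel.id_apply a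
        rw [hfun]
        exact Measure.bind_dirac
      rw [hid, hid]
      have hcard : (((Finset.Icc 1 (0 - 1)).filter fun j =>
          δ ≤ γ (shiftBack (j * M) ω) ∧ nD (shiftBack (j * M) ω) ≤ M).card) = 0 := by
        simp
      rw [hcard, pow_zero, mul_one]
      exact h
    | succ q ih =>
      intro p pq hp hpq ε hε h
      have hmulsucc : (q + 1) * M = q * M + M := by ring
      have hdec : Rcomp R ((q + 1) * M) (shiftBack ((q + 1) * M) ω) =
          (Rcomp R (q * M) (shiftBack (q * M) ω)) ∘ₖ
            Rcomp R M (shiftBack ((q + 1) * M) ω) := by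
        rw [hmulsucc]
        exact hsplit (q * M) M
      haveI := isProbabilityMeasure_bind p (Rcomp R M (shiftBack ((q + 1) * M) ω))
      haveI := isProbabilityMeasure_bind pq (Rcomp R M (shiftBack ((q + 1) * M) ω))
      rw [hdec, hassoc p, hassoc pq]
      have hcard := card_filter_succ (fun j =>
        δ ≤ γ (shiftBack (j * M) ω) ∧ nD (shiftBack (j * M) ω) ≤ M) q
      by_cases hA : 1 ≤ q ∧ (δ ≤ γ (shiftBack (q * M) ω) ∧ nD (shiftBack (q * M) ω) ≤ M)
      · -- contraction step in block q
        have hnq : nD (shiftBack (q * M) ω) ≤ M := hA.2.2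
        have hγq : δ ≤ γ (shiftBack (q * M) ω) := hA.2.1
        have hstep : dLE (p.bind ⇑(Rcomp R M (shiftBack ((q + 1) * M) ω)))
            (pq.bind ⇑(Rcomp R M (shiftBack ((q + 1) * M) ω))) ((1 - δ) * ε) := by
          have hM' : nD (shiftBack (q * M) ω) + (M - nD (shiftBack (q * M) ω)) = M :=
            Nat.add_sub_cancel' hnq
          have hMle : M ≤ (q + 1) * M := Nat.le_mul_of_pos_left M (Nat.succ_pos q)
          have hBdec : Rcomp R M (shiftBack ((q + 1) * M) ω) =
              (Rcomp R (nD (shiftBack (q * M) ω))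
                  (shiftBack (q * M + nD (shiftBack (q * M) ω)) ω)) ∘ₖ
                Rcomp R (M - nD (shiftBack (q * M) ω)) (shiftBack ((q + 1) * M) ω) := by
            have hstep := Rcomp_add R (nD (shiftBack (q * M) ω))
              (M - nD (shiftBack (q * M) ω)) (shiftBack ((q + 1) * M) ω)
            rw [hM', shift_iter_shiftBack (le_trans (Nat.sub_le _ _) hMle)] at hstep
            rw [show (q + 1) * M - (M - nD (shiftBack (q * M) ω)) =
              q * M + nD (shiftBack (q * M) ω) from by rw [hmulsucc]; omega] at hstep
            exact hstep
          have hsb : shiftBack (nD (shiftBack (q * M) ω)) (shiftBack (q * M) ω) =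
              shiftBack (q * M + nD (shiftBack (q * M) ω)) ω := by
            rw [shiftBack_shiftBack, Nat.add_comm]
          have hDoebD : ∀ (x : X) (Γ : Set X), MeasurableSet Γ →
              ENNReal.ofReal δ * m (shiftBack (q * M) ω) Γ ≤
                Rcomp R (nD (shiftBack (q * M) ω))
                  (shiftBack (q * M + nD (shiftBack (q * M) ω)) ω) x Γ := by
            intro x Γ hΓ
            have h1 := hω q x Γ hΓ
            rw [hsb] at h1
            exact le_trans (mul_le_mul_left (ENNReal.ofReal_le_ofReal hγq) _) h1
          haveI := hmprob (shiftBack (q * M) ω)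
          rw [hBdec, hassoc p, hassoc pq]
          haveI := isProbabilityMeasure_bind p
            (Rcomp R (M - nD (shiftBack (q * M) ω)) (shiftBack ((q + 1) * M) ω))
          haveI := isProbabilityMeasure_bind pq
            (Rcomp R (M - nD (shiftBack (q * M) ω)) (shiftBack ((q + 1) * M) ω))
          exact dLE_bind_doeblin _ (m (shiftBack (q * M) ω)) hδ0 hδ1 hDoebD hε
            (dLE_bind _ h)
        have hfinal := ih (p.bind ⇑(Rcomp R M (shiftBack ((q + 1) * M) ω)))
          (pq.bind ⇑(Rcomp R M (shiftBack ((q + 1) * M) ω))) inferInstance inferInstance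
          ((1 - δ) * ε) (mul_nonneg (by linarith) hε) hstep
        rw [if_pos hA] at hcard
        rw [hcard, pow_add, pow_one]
        have harith : ε * ((1 - δ) ^ (((Finset.Icc 1 (q - 1)).filter fun j =>
            δ ≤ γ (shiftBack (j * M) ω) ∧ nD (shiftBack (j * M) ω) ≤ M).card) * (1 - δ)) =
            ((1 - δ) * ε) * (1 - δ) ^ (((Finset.Icc 1 (q - 1)).filter fun j =>
            δ ≤ γ (shiftBack (j * M) ω) ∧ nD (shiftBack (j * M) ω) ≤ M).card) := by
          ring
        rw [harith]
        exact hfinal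
      · have hstep : dLE (p.bind ⇑(Rcomp R M (shiftBack ((q + 1) * M) ω)))
            (pq.bind ⇑(Rcomp R M (shiftBack ((q + 1) * M) ω))) ε := dLE_bind _ h
        have hfinal := ih (p.bind ⇑(Rcomp R M (shiftBack ((q + 1) * M) ω)))
          (pq.bind ⇑(Rcomp R M (shiftBack ((q + 1) * M) ω))) inferInstance inferInstance
          ε hε hstep
        rw [if_neg hA, add_zero] at hcard
        rw [hcard]
        exact hfinal
  -- general two-measure bound through K n
  have hG : ∀ n : ℕ, ∀ p pq : Measure X, IsProbabilityMeasure p → IsProbabilityMeasure pq →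
      dLE (p.bind ⇑(Rcomp R n (shiftBack n ω))) (pq.bind ⇑(Rcomp R n (shiftBack n ω)))
        (2 * (1 - δ) ^ (((Finset.Icc 1 (n / M - 1)).filter fun j =>
          δ ≤ γ (shiftBack (j * M) ω) ∧ nD (shiftBack (j * M) ω) ≤ M).card)) := by
    intro n p pq hp hpq
    have hqM : n / M * M ≤ n := Nat.div_mul_le_self n M
    have hdec : Rcomp R n (shiftBack n ω) =
        (Rcomp R (n / M * M) (shiftBack (n / M * M) ω)) ∘ₖ
          Rcomp R (n - n / M * M) (shiftBack n ω) := by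
      have hstep := hsplit (n / M * M) (n - n / M * M)
      rw [Nat.add_sub_cancel' hqM] at hstep
      exact hstep
    haveI := isProbabilityMeasure_bind p (Rcomp R (n - n / M * M) (shiftBack n ω))
    haveI := isProbabilityMeasure_bind pq (Rcomp R (n - n / M * M) (shiftBack n ω))
    rw [hdec, hassoc p, hassoc pq]
    exact hchain (n / M) _ _ inferInstance inferInstance 2 (by norm_num) (dLE_two _ _)
  -- comparison of K at two times
  have hC : ∀ n n' : ℕ, n ≤ n' → ∀ x x' : X,
      dLE (Rcomp R n' (shiftBack n' ω) x') (Rcomp R n (shiftBack n ω) x)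
        (2 * (1 - δ) ^ (((Finset.Icc 1 (n / M - 1)).filter fun j =>
          δ ≤ γ (shiftBack (j * M) ω) ∧ nD (shiftBack (j * M) ω) ≤ M).card)) := by
    intro n n' hnn' x x'
    have hdec : Rcomp R n' (shiftBack n' ω) =
        (Rcomp R n (shiftBack n ω)) ∘ₖ Rcomp R (n' - n) (shiftBack n' ω) := by
      have hstep := hsplit n (n' - n)
      rw [Nat.add_sub_cancel' hnn'] at hstep
      exact hstep
    have e1 : Rcomp R n' (shiftBack n' ω) x' =
        (Rcomp R (n' - n) (shiftBack n' ω) x').bind ⇑(Rcomp R n (shiftBack n ω)) := by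
      rw [hdec, Kernel.comp_apply]
    have e2 : Rcomp R n (shiftBack n ω) x =
        (Measure.dirac x).bind ⇑(Rcomp R n (shiftBack n ω)) :=
      (Measure.dirac_bind (Kernel.measurable _) x).symm
    rw [e1, e2]
    exact hG n _ _ inferInstance inferInstance
  -- notation for the count and monotonicity
  set c : ℕ → ℕ := fun n => (((Finset.Icc 1 (n / M - 1)).filter fun j =>
    δ ≤ γ (shiftBack (j * M) ω) ∧ nD (shiftBack (j * M) ω) ≤ M).card) with hcdef
  have hcC : ∀ n n' : ℕ, n ≤ n' → ∀ x x' : X,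
      dLE (Rcomp R n' (shiftBack n' ω) x') (Rcomp R n (shiftBack n ω) x)
        (2 * (1 - δ) ^ c n) := hC
  have hcmono : Monotone c := by
    intro n n' h
    apply Finset.card_le_card
    apply Finset.filter_subset_filter
    apply Finset.Icc_subset_Icc_right
    have := Nat.div_le_div_right (c := M) h
    omega
  have hbnd_nonneg : ∀ k : ℕ, (0:ℝ) ≤ 2 * (1 - δ) ^ c k := fun k =>
    mul_nonneg (by norm_num) (pow_nonneg (by linarith) _)
  -- reduction of opDist to the pointwise integral bound
  have hopDist : ∀ (μ : Measure X) (n : ℕ),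
      (∀ g : X → ℝ, Measurable g → (∀ x, |g x| ≤ 1) → ∀ x : X,
        |(∫ y, g y ∂(Rcomp R n (shiftBack n ω) x)) - ∫ y, g y ∂μ| ≤ 2 * (1 - δ) ^ c n) →
      opDist (Rcomp R n (shiftBack n ω)) μ ≤ 2 * (1 - δ) ^ c n := by
    intro μ n h
    apply Real.sSup_le
    · rintro r ⟨g, hg, hb, x, rfl⟩
      exact h g hg hb x
    · exact hbnd_nonneg n
  -- two cases: bounded or unbounded number of Doeblin blocks
  by_cases hbdd : BddAbove (Set.range c)
  · -- bounded case: take μω = K n⋆ x0 for n⋆ attaining the sup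
    obtain ⟨nstar, hnstar⟩ : ∃ nstar, c nstar = sSup (Set.range c) := by
      have hmem := Nat.sSup_mem (Set.range_nonempty c) hbdd
      exact hmem
    refine ⟨Rcomp R nstar (shiftBack nstar ω) x0, inferInstance, fun n => ?_⟩
    apply hopDist
    intro g hg hb x
    rcases le_total n nstar with hle | hle
    · have h1 := hcC n nstar hle x x0 g hg hb
      rwa [abs_sub_comm] at h1
    · have h1 := hcC nstar n hle x0 x g hg hb
      refine h1.trans ?_
      have hcn : c n ≤ c nstar := hnstar ▸ le_csSup hbdd (Set.mem_range_self n)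
      exact mul_le_mul_of_nonneg_left
        (pow_le_pow_of_le_one (by linarith) (by linarith) hcn) (by norm_num)
  · -- unbounded case: the measures K k x0 form a Cauchy sequence
    have hctop : Tendsto c atTop atTop := by
      apply tendsto_atTop_atTop_of_monotone hcmono
      intro b
      obtain ⟨v, ⟨nv, rfl⟩, hv⟩ := not_bddAbove_iff.mp hbdd b
      exact ⟨nv, hv.le⟩
    have hε0 : Tendsto (fun k => 2 * (1 - δ) ^ c k) atTop (nhds 0) := by
      have h1 : Tendsto (fun k : ℕ => (1 - δ) ^ k) atTop (nhds 0) :=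
        tendsto_pow_atTop_nhds_zero_of_lt_one (by linarith) (by linarith)
      have h2 := h1.comp hctop
      have h3 := h2.const_mul (2:ℝ)
      simpa using h3
    have hcauchy : ∀ k k', k ≤ k' → ∀ Γ : Set X, MeasurableSet Γ →
        |((Rcomp R k' (shiftBack k' ω) x0) Γ).toReal -
          ((Rcomp R k (shiftBack k ω) x0) Γ).toReal| ≤ 2 * (1 - δ) ^ c k := by
      intro k k' hkk' Γ hΓ
      have hind := hcC k k' hkk' x0 x0 (Γ.indicator fun _ => (1:ℝ))
        (measurable_const.indicator hΓ)
        (fun x => by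
          by_cases hx : x ∈ Γ
          · simp [Set.indicator_of_mem hx]
          · simp [Set.indicator_of_notMem hx])
      rwa [integral_indicator_const (1:ℝ) hΓ, integral_indicator_const (1:ℝ) hΓ,
        smul_eq_mul, smul_eq_mul, mul_one, mul_one] at hind
    obtain ⟨μL, hμprob, hμtendsto⟩ := exists_limit_measure
      (fun k => Rcomp R k (shiftBack k ω) x0) (fun k => inferInstance) _ hcauchy hε0
    refine ⟨μL, hμprob, fun n => ?_⟩
    apply hopDist
    intro g hg hb x
    have hset : ∀ k, ∀ Γ : Set X, MeasurableSet Γ →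
        |((Rcomp R k (shiftBack k ω) x0) Γ).toReal - (μL Γ).toReal| ≤ 2 * (1 - δ) ^ c k := by
      intro k Γ hΓ
      have htd : Tendsto (fun k' => |((Rcomp R k' (shiftBack k' ω) x0) Γ).toReal -
          ((Rcomp R k (shiftBack k ω) x0) Γ).toReal|) atTop
          (nhds (|(μL Γ).toReal - ((Rcomp R k (shiftBack k ω) x0) Γ).toReal|)) :=
        ((hμtendsto Γ hΓ).sub tendsto_const_nhds).abs
      rw [abs_sub_comm]
      exact le_of_tendsto htd
        (eventually_atTop.mpr ⟨k, fun k' hk' => hcauchy k k' hk' Γ hΓ⟩)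
    have hint : ∀ k, |(∫ y, g y ∂(Rcomp R k (shiftBack k ω) x0)) - ∫ y, g y ∂μL| ≤
        2 * (2 * (1 - δ) ^ c k) := fun k =>
      dInt_of_dSet (hbnd_nonneg k) (hset k) g hg hb
    have hgd : Tendsto (fun k => ∫ y, g y ∂(Rcomp R k (shiftBack k ω) x0)) atTop
        (nhds (∫ y, g y ∂μL)) := by
      rw [tendsto_iff_dist_tendsto_zero]
      refine squeeze_zero (g := fun k => 2 * (2 * (1 - δ) ^ c k)) (fun k => dist_nonneg)
        (fun k => ?_) ?_
      · rw [Real.dist_eq]; exact hint k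
      · have h3 := hε0.const_mul (2:ℝ)
        simpa using h3
    have hfin : Tendsto (fun k => |(∫ y, g y ∂(Rcomp R n (shiftBack n ω) x)) -
        ∫ y, g y ∂(Rcomp R k (shiftBack k ω) x0)|) atTop
        (nhds (|(∫ y, g y ∂(Rcomp R n (shiftBack n ω) x)) - ∫ y, g y ∂μL|)) :=
      (tendsto_const_nhds.sub hgd).abs
    refine le_of_tendsto hfin (eventually_atTop.mpr ⟨n, fun k hk => ?_⟩)
    have h1 := hcC n k hk x x0 g hg hb
    rwa [abs_sub_comm] at h1
end Main


/-- **Contraction proposition** (Proposition 3.2). Under the random Doeblin condition,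
with `A = {ω : γ_ω ≥ δ, n_ω ≤ M}`, for `ℙ`-a.e. `ω` there is a probability measure
`μ_ω` such that for every `n`,
`‖R_{θ^{-n}ω,n} − μ_ω‖_∞ ≤ 2 (1-δ)^{Σ_{j=1}^{⌊n/M⌋-1} 1_A(θ^{-jM} ω)}`. -/
theorem contraction_proposition
    (P : Measure (ℤ → 𝒴)) [IsProbabilityMeasure P]
    (herg : Ergodic shift P)
    (R : 𝒴 → Kernel X X) [∀ y, IsMarkovKernel (R y)]
    (hRmeas : ∀ Γ : Set X, MeasurableSet Γ →
      Measurable fun q : 𝒴 × X => R q.1 q.2 Γ)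
    (nD : (ℤ → 𝒴) → ℕ) (γ : (ℤ → 𝒴) → ℝ) (m : (ℤ → 𝒴) → Measure X)
    (hnD : Measurable nD) (hγ : Measurable γ)
    (hγ01 : ∀ ω, γ ω ∈ Set.Ioo (0 : ℝ) 1)
    (hmprob : ∀ ω, IsProbabilityMeasure (m ω))
    (hmmeas : ∀ Γ : Set X, MeasurableSet Γ → Measurable fun ω => m ω Γ)
    (hDoeb : Doeblin P R nD γ m)
    (δ : ℝ) (hδ : δ ∈ Set.Ioo (0 : ℝ) 1) (M : ℕ) (hM : 1 ≤ M) :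
    ∀ᵐ ω ∂P, ∃ μω : Measure X, IsProbabilityMeasure μω ∧
      ∀ n : ℕ, opDist (Rcomp R n (shiftBack n ω)) μω ≤
        2 * (1 - δ) ^
          (((Finset.Icc 1 (n / M - 1)).filter fun j =>
            δ ≤ γ (shiftBack (j * M) ω) ∧ nD (shiftBack (j * M) ω) ≤ M).card) := by
  have hAe : ∀ᵐ ω ∂P, ∀ j : ℕ, ∀ (x : X) (Γ : Set X), MeasurableSet Γ →
      ENNReal.ofReal (γ (shiftBack (j * M) ω)) * m (shiftBack (j * M) ω) Γ ≤
        Rcomp R (nD (shiftBack (j * M) ω))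
          (shiftBack (nD (shiftBack (j * M) ω)) (shiftBack (j * M) ω)) x Γ := by
    rw [ae_all_iff]
    intro j
    have hmp : MeasurePreserving (shiftBack (j * M) : (ℤ → 𝒴) → _) P P :=
      measurePreserving_shiftBack P herg.toMeasurePreserving (j * M)
    have h0 : P {ω' : ℤ → 𝒴 | ¬ ∀ (x : X) (Γ : Set X), MeasurableSet Γ →
        ENNReal.ofReal (γ ω') * m ω' Γ ≤
          Rcomp R (nD ω') (shiftBack (nD ω') ω') x Γ} = 0 := ae_iff.mp hDoeb
    have h1 := hmp.quasiMeasurePreserving.preimage_null h0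
    exact ae_iff.mpr h1
  filter_upwards [hAe] with ω hω
  exact contraction_pointwise R nD γ m hmprob hδ.1 hδ.2 hM ω hω

end
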